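/- Let p₀ > 1, U ⊂ B₁^{d-1}(0) an open set, and γ : U → ℝ real-analytic. Suppose the maximal operator M_Γ[𝟙_U] is bounded on L^{p₀}(ℝ^d). Then for every p > p₀ and every v ∈ U there is a neighborhood U_v of v such that for all λ ≥ 1, all u ∈ ℝ^{d-1}, and all β ∈ ℝ, the Lebesgue measure of {y ∈ U_v : |γ(y) + u·y − β| ≤ λ^{−1}} is at most C |c_v|^{−1/p} λ^{−1/p}, where c_v = ∇γ(v)·v − γ(v) and C is independent of λ, u, v, β. -/

import Mathlib

open MeasureTheory Set
open scoped ENNReal Topology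
open scoped Pointwise

noncomputable section

/-- `Ev n` is the Euclidean space `ℝ^n` (here playing the role of `ℝ^{d-1}`). -/
abbrev Ev (n : ℕ) := EuclideanSpace ℝ (Fin n)

/-- The maximal operator `M_Γ[𝟙_U]f(x) = sup_{t>0} |∫_U f(x' − ty, x_d − tγ(y)) dy|`. -/
def maxOpU (n : ℕ) (U : Set (Ev n)) (γ : Ev n → ℝ) (f : Ev n × ℝ → ℂ) (x : Ev n × ℝ) : ℝ :=
  ⨆ t ∈ Set.Ioi (0 : ℝ), ‖∫ y in U, f (x.1 - t • y, x.2 - t * γ y)‖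

lemma sublevel_ordConnected {g g' : ℝ → ℝ} {I : Set ℝ} (hI : I.OrdConnected)
    {a b m : ℝ} (hm : 0 < m) (hcont : ContinuousOn g I)
    (hder : ∀ s ∈ I ∩ g ⁻¹' Set.Icc a b, HasDerivAt g (g' s) s ∧ m ≤ g' s) :
    (I ∩ g ⁻¹' Set.Icc a b).OrdConnected := by
  constructor
  rintro s ⟨hsI, hsab⟩ s' ⟨hs'I, hs'ab⟩ x hx
  have hxI : x ∈ I := hI.out hsI hs'I hx
  simp only [Set.mem_preimage, Set.mem_Icc] at hsab hs'ab
  have hKI : Set.Icc s s' ⊆ I := hI.out hsI hs'I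
  constructor
  · exact hxI
  simp only [Set.mem_preimage, Set.mem_Icc]
  constructor
  · -- a ≤ g x
    by_contra hgb
    push_neg at hgb
    have hsx : s < x := by
      rcases eq_or_lt_of_le hx.1 with h | h
      · exfalso; rw [← h] at hgb; linarith [hsab.1]
      · exact h
    set Z := Set.Icc s x ∩ g ⁻¹' Set.Ici a with hZdef
    have hZI : Set.Icc s x ⊆ I := fun y hy => hKI ⟨hy.1, hy.2.trans hx.2⟩
    have hZclosed : IsClosed Z :=
      (hcont.mono hZI).preimage_isClosed_of_isClosed isClosed_Icc isClosed_Ici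
    have hZne : Z.Nonempty := ⟨s, ⟨le_refl s, hsx.le⟩, hsab.1⟩
    have hZbdd : BddAbove Z := ⟨x, fun y hy => hy.1.2⟩
    set c := sSup Z with hcdef
    have hcZ : c ∈ Z := hZclosed.csSup_mem hZne hZbdd
    have hc1 : s ≤ c := hcZ.1.1
    have hc2 : c ≤ x := hcZ.1.2
    have hgc_ge : a ≤ g c := hcZ.2
    have hcx : c < x := by
      rcases eq_or_lt_of_le hc2 with h | h
      · exfalso; rw [h] at hgc_ge; linarith
      · exact h
    have hlt : ∀ y, c < y → y ≤ x → g y < a := by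
      intro y hcy hyx
      by_contra h
      push_neg at h
      have : y ∈ Z := ⟨⟨hc1.trans hcy.le, hyx⟩, h⟩
      exact absurd (le_csSup hZbdd this) (not_le.2 hcy)
    have hcI : c ∈ I := hZI hcZ.1
    -- g c ≤ a via limit from the right
    have hgc_le : g c ≤ a := by
      have htend : Filter.Tendsto g (𝓝[Set.Ioo c x] c) (𝓝 (g c)) :=
        (hcont c hcI).mono (fun y hy => hZI ⟨hc1.trans hy.1.le, hy.2.le⟩) |>.tendsto
      rw [nhdsWithin_Ioo_eq_nhdsGT hcx] at htend
      refine le_of_tendsto htend ?_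
      filter_upwards [Ioo_mem_nhdsGT_of_mem ⟨le_refl c, hcx⟩] with y hy
      exact (hlt y hy.1 hy.2.le).le
    have hgc : g c = a := le_antisymm hgc_le hgc_ge
    have hcT : c ∈ I ∩ g ⁻¹' Set.Icc a b := ⟨hcI, by
      simp only [Set.mem_preimage, Set.mem_Icc, hgc]
      exact ⟨le_refl a, by linarith [hsab.1, hsab.2]⟩⟩
    obtain ⟨hd, hm'⟩ := hder c hcT
    -- slope from the right is ≤ 0
    have hslope := hasDerivAt_iff_tendsto_slope.1 hd
    have hslope' : Filter.Tendsto (slope g c) (𝓝[>] c) (𝓝 (g' c)) :=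
      hslope.mono_left (nhdsWithin_mono c (fun y hy => ne_of_gt hy))
    have hev : ∀ᶠ y in 𝓝[>] c, slope g c y ≤ 0 := by
      filter_upwards [Ioo_mem_nhdsGT_of_mem ⟨le_refl c, hcx⟩] with y hy
      rw [slope_def_field]
      rw [div_eq_mul_inv]
      apply mul_nonpos_of_nonpos_of_nonneg
      · have := hlt y hy.1 hy.2.le; rw [hgc]; linarith
      · have : (0:ℝ) < y - c := by linarith [hy.1]
        positivity
    have : g' c ≤ 0 := le_of_tendsto hslope' hev
    linarith
  · -- g x ≤ b
    by_contra hgb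
    push_neg at hgb
    have hxs' : x < s' := by
      rcases eq_or_lt_of_le hx.2 with h | h
      · exfalso; rw [h] at hgb; linarith [hs'ab.2]
      · exact h
    set Z := Set.Icc x s' ∩ g ⁻¹' Set.Iic b with hZdef
    have hZI : Set.Icc x s' ⊆ I := fun y hy => hKI ⟨hx.1.trans hy.1, hy.2⟩
    have hZclosed : IsClosed Z :=
      (hcont.mono hZI).preimage_isClosed_of_isClosed isClosed_Icc isClosed_Iic
    have hZne : Z.Nonempty := ⟨s', ⟨hxs'.le, le_refl s'⟩, hs'ab.2⟩
    have hZbdd : BddBelow Z := ⟨x, fun y hy => hy.1.1⟩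
    set c := sInf Z with hcdef
    have hcZ : c ∈ Z := hZclosed.csInf_mem hZne hZbdd
    have hc1 : x ≤ c := hcZ.1.1
    have hc2 : c ≤ s' := hcZ.1.2
    have hgc_le : g c ≤ b := hcZ.2
    have hxc : x < c := by
      rcases eq_or_lt_of_le hc1 with h | h
      · exfalso; rw [← h] at hgc_le; linarith
      · exact h
    have hlt : ∀ y, x ≤ y → y < c → b < g y := by
      intro y hxy hyc
      by_contra h
      push_neg at h
      have : y ∈ Z := ⟨⟨hxy, hyc.le.trans hc2⟩, h⟩
      exact absurd (csInf_le hZbdd this) (not_le.2 hyc)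
    have hcI : c ∈ I := hZI hcZ.1
    have hgc_ge : b ≤ g c := by
      have htend : Filter.Tendsto g (𝓝[Set.Ioo x c] c) (𝓝 (g c)) :=
        (hcont c hcI).mono (fun y hy => hZI ⟨hy.1.le, hy.2.le.trans hc2⟩) |>.tendsto
      rw [nhdsWithin_Ioo_eq_nhdsLT hxc] at htend
      refine ge_of_tendsto htend ?_
      filter_upwards [Ioo_mem_nhdsLT_of_mem ⟨hxc, le_refl c⟩] with y hy
      exact (hlt y hy.1.le hy.2).le
    have hgc : g c = b := le_antisymm hgc_le hgc_ge
    have hcT : c ∈ I ∩ g ⁻¹' Set.Icc a b := ⟨hcI, by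
      simp only [Set.mem_preimage, Set.mem_Icc, hgc]
      exact ⟨by linarith [hsab.1, hsab.2], le_refl b⟩⟩
    obtain ⟨hd, hm'⟩ := hder c hcT
    have hslope := hasDerivAt_iff_tendsto_slope.1 hd
    have hslope' : Filter.Tendsto (slope g c) (𝓝[<] c) (𝓝 (g' c)) :=
      hslope.mono_left (nhdsWithin_mono c (fun y hy => ne_of_lt hy))
    have hev : ∀ᶠ y in 𝓝[<] c, slope g c y ≤ 0 := by
      filter_upwards [Ioo_mem_nhdsLT_of_mem ⟨hxc, le_refl c⟩] with y hy
      rw [slope_def_field]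
      rw [div_eq_mul_inv]
      apply mul_nonpos_of_nonneg_of_nonpos
      · have := hlt y hy.1.le hy.2; rw [hgc]; linarith
      · have : y - c < 0 := by linarith [hy.2]
        simp only [inv_nonpos]; linarith
    have : g' c ≤ 0 := le_of_tendsto hslope' hev
    linarith

lemma sublevel_1d {g g' : ℝ → ℝ} {I : Set ℝ} (hI : I.OrdConnected)
    {a b m : ℝ} (hm : 0 < m) (hcont : ContinuousOn g I)
    (hder : ∀ s ∈ I ∩ g ⁻¹' Set.Icc a b, HasDerivAt g (g' s) s ∧ m ≤ g' s) :
    volume (I ∩ g ⁻¹' Set.Icc a b) ≤ ENNReal.ofReal (2 * (b - a) / m) := by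
  set T := I ∩ g ⁻¹' Set.Icc a b with hTdef
  rcases T.eq_empty_or_nonempty with hT | ⟨t₀, ht₀⟩
  · rw [hT]; simp
  have hTo := sublevel_ordConnected hI hm hcont hder
  have key : ∀ s ∈ T, ∀ s' ∈ T, s ≤ s' → m * (s' - s) ≤ b - a := by
    intro s hs s' hs' hss
    have hsub : Set.Icc s s' ⊆ T := hTo.out hs hs'
    have hmvt := Convex.mul_sub_le_image_sub_of_le_deriv (convex_Icc s s')
      (fun y hy => ((hder y (hsub hy)).1.differentiableAt).continuousAt.continuousWithinAt)
      (fun y hy => ((hder y (hsub (interior_subset hy))).1.differentiableAt).differentiableWithinAt)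
      (fun y hy => by
        have h := hder y (hsub (interior_subset hy))
        rw [h.1.deriv]; exact h.2)
      s ⟨le_refl s, hss⟩ s' ⟨hss, le_refl s'⟩ hss
    have h1 := hs.2
    have h2 := hs'.2
    simp only [Set.mem_preimage, Set.mem_Icc] at h1 h2
    linarith [hmvt]
  have hba : 0 ≤ b - a := by
    have := key t₀ ht₀ t₀ ht₀ (le_refl _)
    linarith [this]
  have hsub2 : T ⊆ Set.Icc (t₀ - (b - a) / m) (t₀ + (b - a) / m) := by
    intro s hsT
    rcases le_total s t₀ with h | h
    · have := key s hsT t₀ ht₀ h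
      constructor
      · have : t₀ - s ≤ (b - a) / m := by rw [le_div_iff₀ hm]; linarith
        linarith
      · have : (0:ℝ) ≤ (b - a)/m := div_nonneg hba hm.le
        linarith
    · have := key t₀ ht₀ s hsT h
      constructor
      · have : (0:ℝ) ≤ (b - a)/m := div_nonneg hba hm.le
        linarith
      · have : s - t₀ ≤ (b - a) / m := by rw [le_div_iff₀ hm]; linarith
        linarith
  calc volume T ≤ volume (Set.Icc (t₀ - (b - a) / m) (t₀ + (b - a) / m)) := measure_mono hsub2
    _ = ENNReal.ofReal (2 * (b - a) / m) := by
        rw [Real.volume_Icc]; congr 1; ring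

lemma shear_cont (n : ℕ) (u : Ev n) : Continuous (fun z : Ev n × ℝ => z.2 + (inner ℝ u z.1 : ℝ)) :=
  continuous_snd.add (Continuous.inner continuous_const continuous_fst)

lemma shear_volume (n : ℕ) (u : Ev n) {s : Set (Ev n)} (hs : MeasurableSet s)
    {I : Set ℝ} (hI : MeasurableSet I) :
    volume {z : Ev n × ℝ | z.1 ∈ s ∧ z.2 + (inner ℝ u z.1 : ℝ) ∈ I} = volume s * volume I := by
  have hmeas : MeasurableSet {z : Ev n × ℝ | z.1 ∈ s ∧ z.2 + (inner ℝ u z.1 : ℝ) ∈ I} := by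
    apply MeasurableSet.inter
    · exact hs.preimage measurable_fst
    · exact hI.preimage (shear_cont n u).measurable
  rw [MeasureTheory.Measure.volume_eq_prod, Measure.prod_apply hmeas]
  have hcong : ∀ x : Ev n,
      volume (Prod.mk x ⁻¹' {z : Ev n × ℝ | z.1 ∈ s ∧ z.2 + (inner ℝ u z.1 : ℝ) ∈ I})
        = s.indicator (fun _ => volume I) x := by
    intro x
    by_cases hx : x ∈ s
    · have hpre : Prod.mk x ⁻¹' {z : Ev n × ℝ | z.1 ∈ s ∧ z.2 + (inner ℝ u z.1 : ℝ) ∈ I}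
          = (fun r : ℝ => r + (inner ℝ u x : ℝ)) ⁻¹' I := by
        ext r; simp [hx]
      rw [hpre, Set.indicator_of_mem hx]
      exact measure_preimage_add_right volume _ I
    · have hpre : Prod.mk x ⁻¹' {z : Ev n × ℝ | z.1 ∈ s ∧ z.2 + (inner ℝ u z.1 : ℝ) ∈ I} = ∅ := by
        ext r; simp [hx]
      rw [hpre, Set.indicator_of_notMem hx]
      simp
  rw [lintegral_congr hcong, lintegral_indicator hs, setLIntegral_const, mul_comm]

-- pick the time t
lemma pick_t {lam β ξ : ℝ} (hlam : 1 ≤ lam)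
    (hξ : ξ ∈ Set.Icc (min β (2*β) - lam⁻¹) (max β (2*β) + lam⁻¹)) :
    ∃ t : ℝ, 1 ≤ t ∧ t ≤ 2 ∧ |ξ - t*β| ≤ lam⁻¹ := by
  have hlam0 : (0:ℝ) < lam := by linarith
  have hlinv : (0:ℝ) ≤ lam⁻¹ := by positivity
  obtain ⟨hξ1, hξ2⟩ := hξ
  rcases lt_trichotomy β 0 with hβ | hβ | hβ
  · have hmin : min β (2*β) = 2*β := min_eq_right (by linarith)
    have hmax : max β (2*β) = β := max_eq_left (by linarith)
    rw [hmin] at hξ1; rw [hmax] at hξ2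
    rcases le_or_gt β ξ with h1 | h1
    · exact ⟨1, le_refl _, by norm_num, by rw [abs_le]; constructor <;> nlinarith⟩
    rcases le_or_gt ξ (2*β) with h2 | h2
    · exact ⟨2, by norm_num, le_refl _, by rw [abs_le]; constructor <;> nlinarith⟩
    · refine ⟨ξ/β, ?_, ?_, ?_⟩
      · rw [le_div_iff_of_neg hβ]; linarith
      · rw [div_le_iff_of_neg hβ]; linarith
      · rw [div_mul_cancel₀ _ (ne_of_lt hβ)]; simpa using hlinv
  · subst hβ
    refine ⟨1, le_refl _, by norm_num, ?_⟩
    simp only [mul_zero, min_self, max_self, zero_sub, zero_add] at *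
    rw [abs_le]; constructor <;> linarith
  · have hmin : min β (2*β) = β := min_eq_left (by linarith)
    have hmax : max β (2*β) = 2*β := max_eq_right (by linarith)
    rw [hmin] at hξ1; rw [hmax] at hξ2
    rcases le_or_gt ξ β with h1 | h1
    · exact ⟨1, le_refl _, by norm_num, by rw [abs_le]; constructor <;> nlinarith⟩
    rcases le_or_gt (2*β) ξ with h2 | h2
    · exact ⟨2, by norm_num, le_refl _, by rw [abs_le]; constructor <;> nlinarith⟩
    · refine ⟨ξ/β, ?_, ?_, ?_⟩
      · rw [le_div_iff₀ hβ]; linarith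
      · rw [div_le_iff₀ hβ]; linarith
      · rw [div_mul_cancel₀ _ (ne_of_gt hβ)]; simpa using hlinv

lemma caseA (n : ℕ) (p₀ : ℝ) (hp₀ : 1 < p₀)
    (U : Set (Ev n)) (hUopen : IsOpen U) (hUball : U ⊆ Metric.ball 0 1)
    (γ : Ev n → ℝ) (hγc : ContinuousOn γ U)
    (A : ℝ)
    (hmax : ∀ f : Ev n × ℝ → ℂ,
      eLpNorm (maxOpU n U γ f) (ENNReal.ofReal p₀) volume ≤
        ENNReal.ofReal A * eLpNorm f (ENNReal.ofReal p₀) volume)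
    (lam : ℝ) (hlam : 1 ≤ lam) (u : Ev n) (β : ℝ)
    {E : Set (Ev n)} (hEU : E ⊆ U)
    (hE : ∀ y ∈ E, |γ y + (inner ℝ u y : ℝ) - β| ≤ lam⁻¹) :
    volume E * (volume (Metric.ball (0:Ev n) 1) * ENNReal.ofReal (|β| + 2/lam)) ^ (1/p₀)
      ≤ ENNReal.ofReal A * (volume (Metric.ball (0:Ev n) 4) * ENNReal.ofReal (8/lam)) ^ (1/p₀) := by
  have hlam0 : (0:ℝ) < lam := by linarith
  set q := ENNReal.ofReal p₀ with hqdef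
  have hq0 : q ≠ 0 := by
    simp [hqdef, ENNReal.ofReal_eq_zero]; linarith
  have hqT : q ≠ ∞ := ENNReal.ofReal_ne_top
  have hqto : q.toReal = p₀ := ENNReal.toReal_ofReal (by linarith)
  set J := Set.Icc (min β (2*β) - lam⁻¹) (max β (2*β) + lam⁻¹) with hJdef
  set X := {x : Ev n × ℝ | x.1 ∈ Metric.ball (0:Ev n) 1 ∧ x.2 + (inner ℝ u x.1 : ℝ) ∈ J} with hXdef
  set N := {z : Ev n × ℝ | z.1 ∈ Metric.ball (0:Ev n) 4 ∧
      z.2 + (inner ℝ u z.1 : ℝ) ∈ Set.Ioo (-(4/lam)) (4/lam)} with hNdef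
  set f := (fun z : Ev n × ℝ => Set.indicator N (fun _ => (1:ℂ)) z) with hfdef
  have hNopen : IsOpen N := by
    have : N = Prod.fst ⁻¹' Metric.ball (0:Ev n) 4 ∩
        (fun z : Ev n × ℝ => z.2 + (inner ℝ u z.1 : ℝ)) ⁻¹' Set.Ioo (-(4/lam)) (4/lam) := rfl
    rw [this]
    exact (Metric.isOpen_ball.preimage continuous_fst).inter (isOpen_Ioo.preimage (shear_cont n u))
  have hXmeas : MeasurableSet X := by
    have : X = Prod.fst ⁻¹' Metric.ball (0:Ev n) 1 ∩
        (fun z : Ev n × ℝ => z.2 + (inner ℝ u z.1 : ℝ)) ⁻¹' J := rfl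
    rw [this]
    exact (measurableSet_ball.preimage measurable_fst).inter
      (measurableSet_Icc.preimage (shear_cont n u).measurable)
  have hUfin : volume U < ∞ :=
    lt_of_le_of_lt (measure_mono hUball) measure_ball_lt_top
  have hEfin : volume E < ∞ :=
    lt_of_le_of_lt (measure_mono (hEU.trans hUball)) measure_ball_lt_top
  -- volumes of X and N
  have hvolX : volume X = volume (Metric.ball (0:Ev n) 1) * ENNReal.ofReal (|β| + 2/lam) := by
    rw [hXdef, shear_volume n u measurableSet_ball measurableSet_Icc, Real.volume_Icc]
    have h := max_sub_min_eq_abs β (2*β)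
    have h2 : |β - 2*β| = |β| := by rw [show β - 2*β = -β by ring, abs_neg]
    have h3 : (2:ℝ)/lam = 2*lam⁻¹ := by rw [div_eq_mul_inv]
    rw [abs_sub_comm] at h
    rw [h2] at h
    have hreal : max β (2*β) + lam⁻¹ - (min β (2*β) - lam⁻¹) = |β| + 2/lam := by linarith
    rw [hreal]
  have hvolN : volume N = volume (Metric.ball (0:Ev n) 4) * ENNReal.ofReal (8/lam) := by
    rw [hNdef, shear_volume n u measurableSet_ball measurableSet_Ioo, Real.volume_Ioo]
    congr 1
    ring
  -- pointwise lower bound for maxOpU f on X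
  have hpt : ∀ x ∈ X, (volume E).toReal ≤ maxOpU n U γ f x := by
    intro x hx
    obtain ⟨t, ht1, ht2, htβ⟩ := pick_t hlam hx.2
    have ht0 : (0:ℝ) < t := by linarith
    set T := fun y : Ev n => (x.1 - t • y, x.2 - t * γ y) with hTdef
    have hTcont : ContinuousOn T U := by
      apply ContinuousOn.prodMk
      · exact (continuous_const.sub (continuous_id.const_smul t)).continuousOn
      · exact continuousOn_const.sub (continuousOn_const.mul hγc)
    set W := U ∩ T ⁻¹' N with hWdef
    have hWopen : IsOpen W := hTcont.isOpen_inter_preimage hUopen hNopen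
    have hWmeas : MeasurableSet W := hWopen.measurableSet
    have hWfin : volume W < ∞ :=
      lt_of_le_of_lt (measure_mono ((Set.inter_subset_left).trans hUball)) measure_ball_lt_top
    have hEW : E ⊆ W := by
      intro y hy
      have hyU : y ∈ U := hEU hy
      have hyb : ‖y‖ < 1 := by
        have := hUball hyU; rwa [Metric.mem_ball, dist_zero_right] at this
      refine ⟨hyU, ?_, ?_⟩
      · -- x.1 - t • y ∈ ball 0 4
        rw [Metric.mem_ball, dist_zero_right]
        have hx1 : ‖x.1‖ < 1 := by
          have := hx.1; rwa [Metric.mem_ball, dist_zero_right] at this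
        calc ‖x.1 - t • y‖ ≤ ‖x.1‖ + ‖t • y‖ := norm_sub_le _ _
          _ = ‖x.1‖ + |t| * ‖y‖ := by rw [norm_smul, Real.norm_eq_abs]
          _ ≤ ‖x.1‖ + 2 * ‖y‖ := by
              have : |t| ≤ 2 := by rw [abs_le]; constructor <;> linarith
              nlinarith [norm_nonneg y]
          _ < 4 := by nlinarith [norm_nonneg y]
      · -- vertical condition
        have hinner : (inner ℝ u (x.1 - t • y) : ℝ) = (inner ℝ u x.1 : ℝ) - t * (inner ℝ u y : ℝ) := by
          rw [inner_sub_right, real_inner_smul_right]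
        have hexp : (x.2 - t * γ y) + (inner ℝ u (x.1 - t • y) : ℝ)
            = (x.2 + (inner ℝ u x.1 : ℝ) - t*β) - t * ((γ y + (inner ℝ u y : ℝ)) - β) := by
          rw [hinner]; ring
        have hEy := hE y hy
        have h3 : |(x.2 - t * γ y) + (inner ℝ u (x.1 - t • y) : ℝ)| ≤ 3 * lam⁻¹ := by
          rw [hexp]
          calc |(x.2 + (inner ℝ u x.1 : ℝ) - t*β) - t * ((γ y + (inner ℝ u y : ℝ)) - β)|
              ≤ |x.2 + (inner ℝ u x.1 : ℝ) - t*β| + |t * ((γ y + (inner ℝ u y : ℝ)) - β)| :=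
                abs_sub _ _
            _ ≤ lam⁻¹ + 2 * lam⁻¹ := by
                have : |t * ((γ y + (inner ℝ u y : ℝ)) - β)| = |t| * |(γ y + (inner ℝ u y : ℝ)) - β| :=
                  abs_mul _ _
                rw [this]
                have habs : |t| ≤ 2 := by rw [abs_le]; constructor <;> linarith
                have := abs_nonneg ((γ y + (inner ℝ u y : ℝ)) - β)
                nlinarith
            _ = 3 * lam⁻¹ := by ring
        have h4 : (3:ℝ) * lam⁻¹ < 4 / lam := by
          rw [div_eq_mul_inv]
          have : (0:ℝ) < lam⁻¹ := by positivity
          linarith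
        rw [Set.mem_Ioo]
        rw [abs_le] at h3
        constructor <;> nlinarith
    -- the integral at time t
    have hkey : ∫ y in U, f (T y) = ((volume W).toReal : ℂ) := by
      have hEq : Set.EqOn (fun y => f (T y))
          (fun y => Set.indicator W (fun _ => (1:ℂ)) y) U := by
        intro y hyU
        by_cases hyN : T y ∈ N <;>
          simp [hfdef, Set.indicator_apply, hWdef, Set.mem_inter_iff, hyU, Set.mem_preimage, hyN]
      rw [setIntegral_congr_fun hUopen.measurableSet hEq, integral_indicator_const (1:ℂ) hWmeas]
      rw [measureReal_def, Measure.restrict_apply hWmeas]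
      rw [Set.inter_eq_self_of_subset_left (Set.inter_subset_left : W ⊆ U)]
      simp
      rfl
    have hnorm : (volume E).toReal ≤ ‖∫ y in U, f (T y)‖ := by
      rw [hkey]
      have h1 : ‖((volume W).toReal : ℂ)‖ = (volume W).toReal := by
        rw [Complex.norm_real, Real.norm_eq_abs, abs_of_nonneg ENNReal.toReal_nonneg]
      rw [h1]
      exact ENNReal.toReal_mono hWfin.ne (measure_mono hEW)
    -- bounding by the sup
    have hIbound : ∀ t' : ℝ, ‖∫ y in U, f (x.1 - t' • y, x.2 - t' * γ y)‖ ≤ (volume U).toReal := by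
      intro t'
      by_cases hint : IntegrableOn (fun y => f (x.1 - t' • y, x.2 - t' * γ y)) U volume
      · calc ‖∫ y in U, f (x.1 - t' • y, x.2 - t' * γ y)‖
            ≤ ∫ y in U, ‖f (x.1 - t' • y, x.2 - t' * γ y)‖ := norm_integral_le_integral_norm _
          _ ≤ ∫ y in U, (1:ℝ) := by
              apply integral_mono hint.norm
              · exact (integrableOn_const hUfin.ne)
              · intro y
                simp only [hfdef]
                calc ‖Set.indicator N (fun _ => (1:ℂ)) _‖ ≤ ‖(1:ℂ)‖ :=
                    norm_indicator_le_norm_self _ _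
                  _ = 1 := by simp
          _ = (volume U).toReal := by simp [measureReal_def]
      · rw [integral_undef hint]
        simp [ENNReal.toReal_nonneg]
    have hbdd : BddAbove (Set.range fun t' : ℝ =>
        ⨆ _ : t' ∈ Set.Ioi (0:ℝ), ‖∫ y in U, f (x.1 - t' • y, x.2 - t' * γ y)‖) := by
      refine ⟨(volume U).toReal, ?_⟩
      rintro r ⟨t', rfl⟩
      exact Real.iSup_le (fun _ => hIbound t') ENNReal.toReal_nonneg
    calc (volume E).toReal ≤ ‖∫ y in U, f (T y)‖ := hnorm
      _ = ⨆ _ : t ∈ Set.Ioi (0:ℝ), ‖∫ y in U, f (x.1 - t • y, x.2 - t * γ y)‖ := by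
          rw [ciSup_pos (show t ∈ Set.Ioi (0:ℝ) from ht0)]
      _ ≤ maxOpU n U γ f x := le_ciSup hbdd t
  -- eLpNorm chain
  have h1 : eLpNorm (Set.indicator X (fun _ => (volume E).toReal) : Ev n × ℝ → ℝ) q volume
      ≤ eLpNorm (maxOpU n U γ f) q volume := by
    apply eLpNorm_mono
    intro x
    by_cases hxX : x ∈ X
    · rw [Set.indicator_of_mem hxX, Real.norm_eq_abs, abs_of_nonneg ENNReal.toReal_nonneg,
        Real.norm_eq_abs]
      exact (hpt x hxX).trans (le_abs_self _)
    · rw [Set.indicator_of_notMem hxX]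
      simp
  have h2 : eLpNorm (Set.indicator X (fun _ => (volume E).toReal) : Ev n × ℝ → ℝ) q volume
      = volume E * (volume X) ^ (1/p₀) := by
    rw [eLpNorm_indicator_const hXmeas hq0 hqT, hqto]
    congr 1
    rw [Real.enorm_eq_ofReal ENNReal.toReal_nonneg, ENNReal.ofReal_toReal hEfin.ne]
  have h3 : eLpNorm f q volume = (volume N) ^ (1/p₀) := by
    rw [hfdef, eLpNorm_indicator_const hNopen.measurableSet hq0 hqT, hqto]
    simp
  have := hmax f
  rw [h3] at this
  calc volume E * (volume (Metric.ball (0:Ev n) 1) * ENNReal.ofReal (|β| + 2/lam)) ^ (1/p₀)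
      = volume E * (volume X) ^ (1/p₀) := by rw [hvolX]
    _ = eLpNorm (Set.indicator X (fun _ => (volume E).toReal) : Ev n × ℝ → ℝ) q volume := h2.symm
    _ ≤ eLpNorm (maxOpU n U γ f) q volume := h1
    _ ≤ ENNReal.ofReal A * (volume N) ^ (1/p₀) := this
    _ = ENNReal.ofReal A * (volume (Metric.ball (0:Ev n) 4) * ENNReal.ofReal (8/lam)) ^ (1/p₀) := by
        rw [hvolN]

set_option maxHeartbeats 2000000 in
lemma caseB (n : ℕ) (U : Set (Ev n)) (hUball : U ⊆ Metric.ball 0 1)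
    (γ : Ev n → ℝ) (hγ : AnalyticOnNhd ℝ γ U)
    (v : Ev n) (r : ℝ) (hUv : Metric.ball v r ⊆ U)
    (c : ℝ) (hc0 : c ≠ 0)
    (hψ : ∀ y ∈ Metric.ball v r, |fderiv ℝ γ y y - γ y - c| ≤ |c|/8)
    (lam : ℝ) (hlam : 1 ≤ lam) (u : Ev n) (β : ℝ)
    (hlamc : 8 ≤ lam * |c|) (hsign : |c|/2 ≤ |c + β|) :
    volume {y : Ev n | y ∈ Metric.ball v r ∧ |γ y + (inner ℝ u y : ℝ) - β| ≤ lam⁻¹}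
      ≤ ENNReal.ofReal ((16 * (volume (Metric.ball (0:Ev n) 2)).toReal / Real.log 2) / (lam * |c|)) := by
  have hlam0 : (0:ℝ) < lam := by linarith
  have hcpos : (0:ℝ) < |c| := abs_pos.2 hc0
  have hlinv0 : (0:ℝ) < lam⁻¹ := by positivity
  have hlinv : lam⁻¹ ≤ |c|/8 := by
    rw [inv_le_iff_one_le_mul₀ hlam0]
    nlinarith
  have hlog2 : (0:ℝ) < Real.log 2 := Real.log_pos (by norm_num)
  set φ := fun y : Ev n => γ y + (inner ℝ u y : ℝ) with hφdef
  set E := {y : Ev n | y ∈ Metric.ball v r ∧ |γ y + (inner ℝ u y : ℝ) - β| ≤ lam⁻¹} with hEdef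
  have hφcont : ContinuousOn φ (Metric.ball v r) :=
    ((hγ.continuousOn.mono hUv).add
      ((Continuous.inner continuous_const continuous_id).continuousOn))
  -- measurability of E
  have hEmeas : MeasurableSet E := by
    have hopen2 : IsOpen (Metric.ball v r ∩ φ ⁻¹' (Set.Icc (β - lam⁻¹) (β + lam⁻¹))ᶜ) :=
      hφcont.isOpen_inter_preimage Metric.isOpen_ball isClosed_Icc.isOpen_compl
    have hmem : ∀ y, y ∈ E ↔ (y ∈ Metric.ball v r ∧ φ y ∈ Set.Icc (β - lam⁻¹) (β + lam⁻¹)) := by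
      intro y
      simp only [hEdef, Set.mem_setOf_eq, Set.mem_Icc, abs_le]
      constructor
      · rintro ⟨h1, h2, h3⟩; exact ⟨h1, by linarith, by linarith⟩
      · rintro ⟨h1, h2, h3⟩; exact ⟨h1, by linarith, by linarith⟩
    have hEeq : E = Metric.ball v r \
        (Metric.ball v r ∩ φ ⁻¹' (Set.Icc (β - lam⁻¹) (β + lam⁻¹))ᶜ) := by
      ext y
      rw [hmem y]
      simp only [Set.mem_diff, Set.mem_inter_iff, Set.mem_preimage, Set.mem_compl_iff]
      tauto
    rw [hEeq]
    exact measurableSet_ball.diff hopen2.measurableSet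
  have hEb1 : E ⊆ Metric.ball (0:Ev n) 1 := fun y hy => hUball (hUv hy.1)
  -- the product set
  set A := {q : ℝ × Ev n | q.1 ∈ Set.Ioo 0 (Real.log 2) ∧ Real.exp (-q.1) • q.2 ∈ E} with hAdef
  have hsmulcont : Continuous (fun q : ℝ × Ev n => Real.exp (-q.1) • q.2) :=
    ((Real.continuous_exp.comp continuous_fst.neg)).smul continuous_snd
  have hAmeas : MeasurableSet A := by
    have : A = (Prod.fst ⁻¹' Set.Ioo 0 (Real.log 2)) ∩
        ((fun q : ℝ × Ev n => Real.exp (-q.1) • q.2) ⁻¹' E) := rfl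
    rw [this]
    exact (measurableSet_Ioo.preimage measurable_fst).inter (hEmeas.preimage hsmulcont.measurable)
  have hfinrank : Module.finrank ℝ (Ev n) = n := finrank_euclideanSpace_fin
  -- lower bound for the product measure of A
  have hlower : ENNReal.ofReal (Real.log 2) * volume E
      ≤ (volume : Measure ℝ).prod (volume : Measure (Ev n)) A := by
    rw [Measure.prod_apply hAmeas]
    have hs1 : ∀ s : ℝ, Set.indicator (Set.Ioo (0:ℝ) (Real.log 2)) (fun _ => volume E) s
        ≤ volume (Prod.mk s ⁻¹' A) := by
      intro s
      by_cases hs : s ∈ Set.Ioo (0:ℝ) (Real.log 2)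
      · rw [Set.indicator_of_mem hs]
        have hpre : Prod.mk s ⁻¹' A = (fun x : Ev n => Real.exp (-s) • x) ⁻¹' E := by
          ext x
          constructor
          · exact fun h => h.2
          · exact fun h => ⟨hs, h⟩
        rw [hpre]
        have hexp0 : Real.exp (-s) ≠ 0 := (Real.exp_pos _).ne'
        have hpre2 : (fun x : Ev n => Real.exp (-s) • x) ⁻¹' E
            = ((Real.exp (-s))⁻¹ • E : Set (Ev n)) := Set.preimage_smul₀ hexp0 E
        rw [hpre2, ← Real.exp_neg, neg_neg]
        rw [Measure.addHaar_smul volume (Real.exp s) E]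
        have h1 : (1:ℝ≥0∞) ≤ ENNReal.ofReal |Real.exp s ^ Module.finrank ℝ (Ev n)| := by
          rw [← ENNReal.ofReal_one]
          apply ENNReal.ofReal_le_ofReal
          rw [abs_of_pos (by positivity)]
          apply one_le_pow₀
          rw [← Real.exp_zero]
          exact Real.exp_le_exp.2 hs.1.le
        calc volume E = 1 * volume E := (one_mul _).symm
          _ ≤ ENNReal.ofReal |Real.exp s ^ Module.finrank ℝ (Ev n)| * volume E :=
              mul_le_mul_left h1 _
      · rw [Set.indicator_of_notMem hs]
        exact bot_le
    calc ENNReal.ofReal (Real.log 2) * volume E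
        = ∫⁻ s, Set.indicator (Set.Ioo (0:ℝ) (Real.log 2)) (fun _ => volume E) s := by
          rw [lintegral_indicator measurableSet_Ioo, setLIntegral_const, Real.volume_Ioo,
            sub_zero, mul_comm]
      _ ≤ ∫⁻ s, volume (Prod.mk s ⁻¹' A) := lintegral_mono hs1
  -- upper bound via slices in x
  have hupper : (volume : Measure ℝ).prod (volume : Measure (Ev n)) A
      ≤ ENNReal.ofReal (16 / (lam * |c|)) * volume (Metric.ball (0:Ev n) 2) := by
    rw [Measure.prod_apply_symm hAmeas]
    have hsl : ∀ x : Ev n, volume ((fun s => (s, x)) ⁻¹' A)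
        ≤ Set.indicator (Metric.ball (0:Ev n) 2) (fun _ => ENNReal.ofReal (16 / (lam * |c|))) x := by
      intro x
      by_cases hx2 : x ∈ Metric.ball (0:Ev n) 2
      · rw [Set.indicator_of_mem hx2]
        -- 1-d sublevel estimate along the ray through x
        set I := {s : ℝ | Real.exp (-s) • x ∈ Metric.ball v r} with hIdef
        set g := fun s : ℝ => φ (Real.exp (-s) • x) with hgdef
        have hIord : I.OrdConnected := by
          have hJconv : Convex ℝ {ρ : ℝ | ρ • x ∈ Metric.ball v r} := by
            intro ρ₁ h₁ ρ₂ h₂ a b ha hb hab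
            have : (a * ρ₁ + b * ρ₂) • x = a • (ρ₁ • x) + b • (ρ₂ • x) := by
              rw [add_smul, mul_smul, mul_smul]
            show (a • ρ₁ + b • ρ₂) • x ∈ Metric.ball v r
            simp only [smul_eq_mul]
            rw [this]
            exact convex_ball v r h₁ h₂ ha hb hab
          constructor
          intro s₁ h₁ s₂ h₂ s hs
          exact hJconv.ordConnected.out h₂ h₁
            ⟨Real.exp_le_exp.2 (neg_le_neg hs.2), Real.exp_le_exp.2 (neg_le_neg hs.1)⟩
        have hcurvecont : Continuous (fun s : ℝ => Real.exp (-s) • x) :=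
          (Real.continuous_exp.comp continuous_neg).smul continuous_const
        have hgcont : ContinuousOn g I :=
          hφcont.comp hcurvecont.continuousOn (fun s hs => hs)
        -- derivative information
        set D := fun s : ℝ => (fderiv ℝ γ (Real.exp (-s) • x)) (Real.exp (-s) • x)
            + (inner ℝ u (Real.exp (-s) • x) : ℝ) with hDdef
        have hcurve : ∀ s : ℝ, HasDerivAt (fun s : ℝ => Real.exp (-s) • x)
            (-(Real.exp (-s)) • x) s := by
          intro s
          have h1 : HasDerivAt (fun s : ℝ => Real.exp (-s)) (-(Real.exp (-s))) s := by
            simpa [Function.comp_def] using (Real.hasDerivAt_exp (-s)).comp s (hasDerivAt_neg s)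
          exact h1.smul_const x
        have hgder : ∀ s ∈ I, HasDerivAt g (-(D s)) s := by
          intro s hs
          set y₀ := Real.exp (-s) • x with hy₀def
          have hy₀U : y₀ ∈ U := hUv hs
          have hγd : DifferentiableAt ℝ γ y₀ := (hγ y₀ hy₀U).differentiableAt
          have h2 : HasFDerivAt (fun y : Ev n => (inner ℝ u y : ℝ)) (innerSL ℝ u) y₀ :=
            (innerSL ℝ u).hasFDerivAt
          have hφder : HasFDerivAt φ (fderiv ℝ γ y₀ + innerSL ℝ u) y₀ :=
            hγd.hasFDerivAt.add h2
          have hcomp := hφder.comp_hasDerivAt s (hcurve s)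
          have hval : (fderiv ℝ γ y₀ + innerSL ℝ u) (-(Real.exp (-s)) • x) = -(D s) := by
            have hz : (-(Real.exp (-s))) • x = -y₀ := by rw [hy₀def, neg_smul]
            rw [hz, map_neg, hDdef]
            simp only [ContinuousLinearMap.add_apply, innerSL_apply_apply, hy₀def]
          rw [hval] at hcomp
          exact hcomp
        have hDbound : ∀ s ∈ I ∩ g ⁻¹' Set.Icc (β - lam⁻¹) (β + lam⁻¹),
            (c + β) - |c|/4 ≤ D s ∧ D s ≤ (c + β) + |c|/4 := by
          intro s hsT
          set y₀ := Real.exp (-s) • x with hy₀def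
          have hy₀b : y₀ ∈ Metric.ball v r := hsT.1
          have hψy := hψ y₀ hy₀b
          have hgs : g s ∈ Set.Icc (β - lam⁻¹) (β + lam⁻¹) := hsT.2
          simp only [Set.mem_Icc] at hgs
          have hDeq : D s = (fderiv ℝ γ y₀ y₀ - γ y₀ - c) + c + g s := by
            simp only [hDdef, hgdef, hφdef, ← hy₀def]
            ring
          rw [abs_le] at hψy
          constructor <;> (rw [hDeq]; cases' hgs with hg1 hg2; cases' hψy with hp1 hp2; nlinarith)
        have hsub : (fun s => (s, x)) ⁻¹' A ⊆ I ∩ g ⁻¹' Set.Icc (β - lam⁻¹) (β + lam⁻¹) := by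
          intro s hs
          simp only [Set.mem_preimage, hAdef, Set.mem_setOf_eq] at hs
          obtain ⟨hs1, hs2⟩ := hs
          refine ⟨hs2.1, ?_⟩
          simp only [Set.mem_preimage, Set.mem_Icc, hgdef, hφdef]
          have := hs2.2
          rw [abs_le] at this
          exact ⟨by linarith [this.1], by linarith [this.2]⟩
        have hm4 : (0:ℝ) < |c|/4 := by linarith
        have hkey : volume (I ∩ g ⁻¹' Set.Icc (β - lam⁻¹) (β + lam⁻¹))
            ≤ ENNReal.ofReal (16 / (lam * |c|)) := by
          rcases le_or_gt 0 (c + β) with hcb | hcb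
          · -- c + β ≥ |c|/2 > 0 : derivative of g is ≤ -|c|/4; use -g
            have hcb' : |c|/2 ≤ c + β := by
              rwa [abs_of_nonneg hcb] at hsign
            have happ := sublevel_1d (g := fun s => -(g s)) (g' := D)
              (a := -(β + lam⁻¹)) (b := -(β - lam⁻¹)) hIord hm4
              (hgcont.neg)
              (by
                intro s hsT
                have hsT' : s ∈ I ∩ g ⁻¹' Set.Icc (β - lam⁻¹) (β + lam⁻¹) := by
                  refine ⟨hsT.1, ?_⟩
                  have := hsT.2
                  simp only [Set.mem_preimage, Set.mem_Icc] at this ⊢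
                  constructor <;> linarith [this.1, this.2]
                refine ⟨?_, ?_⟩
                · have := (hgder s hsT.1).neg
                  rw [neg_neg] at this
                  exact this
                · have := hDbound s hsT'
                  linarith [this.1])
            have hseteq : I ∩ (fun s => -(g s)) ⁻¹' Set.Icc (-(β + lam⁻¹)) (-(β - lam⁻¹))
                = I ∩ g ⁻¹' Set.Icc (β - lam⁻¹) (β + lam⁻¹) := by
              ext s
              simp only [Set.mem_inter_iff, Set.mem_preimage, Set.mem_Icc]
              constructor <;> rintro ⟨h1, h2, h3⟩ <;> exact ⟨h1, by linarith, by linarith⟩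
            rw [hseteq] at happ
            refine happ.trans (ENNReal.ofReal_le_ofReal (le_of_eq ?_))
            field_simp
            ring
          · -- c + β < 0, so c + β ≤ -|c|/2 : derivative of g is ≥ |c|/4
            have hcb' : c + β ≤ -(|c|/2) := by
              rw [abs_of_neg hcb] at hsign
              linarith
            have happ := sublevel_1d (g := g) (g' := fun s => -(D s)) hIord hm4 hgcont
              (by
                intro s hsT
                refine ⟨hgder s hsT.1, ?_⟩
                have := hDbound s hsT
                linarith [this.2])
            refine happ.trans (ENNReal.ofReal_le_ofReal (le_of_eq ?_))
            field_simp
            ring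
        exact (measure_mono hsub).trans hkey
      · -- x outside ball 0 2 : empty slice
        rw [Set.indicator_of_notMem hx2]
        have : (fun s => (s, x)) ⁻¹' A = ∅ := by
          rw [Set.eq_empty_iff_forall_notMem]
          intro s hs
          simp only [Set.mem_preimage, hAdef, Set.mem_setOf_eq] at hs
          obtain ⟨hs1, hs2⟩ := hs
          apply hx2
          have h1 : ‖Real.exp (-s) • x‖ < 1 := by
            have := hEb1 hs2
            rwa [Metric.mem_ball, dist_zero_right] at this
          rw [Metric.mem_ball, dist_zero_right]
          have hexp : ‖Real.exp (-s) • x‖ = Real.exp (-s) * ‖x‖ := by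
            rw [norm_smul, Real.norm_eq_abs, abs_of_pos (Real.exp_pos _)]
          rw [hexp] at h1
          have h2 : Real.exp s < 2 := by
            calc Real.exp s < Real.exp (Real.log 2) := Real.exp_lt_exp.2 hs1.2
              _ = 2 := Real.exp_log (by norm_num)
          have h3 : ‖x‖ < Real.exp s := by
            have h4 : Real.exp (-s) > 0 := Real.exp_pos _
            have h5 : Real.exp (-s) * Real.exp s = 1 := by
              rw [← Real.exp_add]; simp
            nlinarith [norm_nonneg x]
          linarith
        rw [this]
        simp
    calc ∫⁻ x, volume ((fun s => (s, x)) ⁻¹' A) ≤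
        ∫⁻ x, Set.indicator (Metric.ball (0:Ev n) 2)
          (fun _ => ENNReal.ofReal (16 / (lam * |c|))) x := lintegral_mono hsl
      _ = ENNReal.ofReal (16 / (lam * |c|)) * volume (Metric.ball (0:Ev n) 2) := by
          rw [lintegral_indicator measurableSet_ball, setLIntegral_const]
  -- combine
  have hcomb : ENNReal.ofReal (Real.log 2) * volume E
      ≤ ENNReal.ofReal (16 / (lam * |c|)) * volume (Metric.ball (0:Ev n) 2) :=
    hlower.trans hupper
  have hfin2 : volume (Metric.ball (0:Ev n) 2) ≠ ∞ := measure_ball_lt_top.ne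
  have hlog0 : ENNReal.ofReal (Real.log 2) ≠ 0 := by
    simp [ENNReal.ofReal_eq_zero]; linarith
  have hlogT : ENNReal.ofReal (Real.log 2) ≠ ∞ := ENNReal.ofReal_ne_top
  have hdiv : volume E ≤ ENNReal.ofReal (16 / (lam * |c|)) *
      volume (Metric.ball (0:Ev n) 2) / ENNReal.ofReal (Real.log 2) := by
    rw [ENNReal.le_div_iff_mul_le (Or.inl hlog0) (Or.inl hlogT), mul_comm]
    exact hcomb
  refine hdiv.trans ?_
  rw [← ENNReal.ofReal_toReal hfin2]
  rw [← ENNReal.ofReal_mul (by positivity), ← ENNReal.ofReal_div_of_pos hlog2]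
  apply ENNReal.ofReal_le_ofReal
  have heq : 16 / (lam * |c|) * (volume (Metric.ball (0:Ev n) 2)).toReal / Real.log 2
      = 16 * (volume (Metric.ball (0:Ev n) 2)).toReal / Real.log 2 / (lam * |c|) := by
    field_simp
    try exact Or.inl trivial
  rw [heq, ENNReal.toReal_ofReal ENNReal.toReal_nonneg]

set_option maxHeartbeats 1000000 in
/-- Let `p₀ > 1`, `U ⊆ B₁^{d-1}(0)` open and `γ : U → ℝ` real-analytic.
If `M_Γ[𝟙_U]` is bounded on `L^{p₀}(ℝ^d)`, then for every `p > p₀` and `v ∈ U` there is a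
neighborhood `U_v` of `v` such that for all `λ ≥ 1`, `u ∈ ℝ^{d-1}` and `β ∈ ℝ`,
`|{y ∈ U_v : |γ(y) + u·y − β| ≤ λ^{-1}}| ≤ C |c_v|^{-1/p} λ^{-1/p}` with
`c_v = ∇γ(v)·v − γ(v)` and `C` independent of `λ, u, v, β`
(the right-hand side being `∞` when `c_v = 0`). -/
theorem uniform_sublevel_set_bound
    (n : ℕ) (hn : 1 ≤ n) (p₀ : ℝ) (hp₀ : 1 < p₀)
    (U : Set (Ev n)) (hUopen : IsOpen U) (hUball : U ⊆ Metric.ball 0 1)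
    (γ : Ev n → ℝ) (hγ : AnalyticOnNhd ℝ γ U)
    (hmax : ∃ C > 0, ∀ f : Ev n × ℝ → ℂ,
      eLpNorm (maxOpU n U γ f) (ENNReal.ofReal p₀) volume ≤
        ENNReal.ofReal C * eLpNorm f (ENNReal.ofReal p₀) volume) :
    ∀ p : ℝ, p₀ < p → ∃ C > (0 : ℝ), ∀ v ∈ U, ∃ Uv ∈ 𝓝 v, Uv ⊆ U ∧
      ∀ lam : ℝ, 1 ≤ lam → ∀ u : Ev n, ∀ β : ℝ,
        volume {y : Ev n | y ∈ Uv ∧ |γ y + (inner ℝ u y : ℝ) - β| ≤ lam⁻¹} ≤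
          ENNReal.ofReal C * (ENNReal.ofReal |fderiv ℝ γ v v - γ v|) ^ (-(1 : ℝ) / p) *
            (ENNReal.ofReal lam) ^ (-(1 : ℝ) / p) := by
  obtain ⟨A, hA0, hmaxA⟩ := hmax
  intro p hpp
  have hp0 : (0:ℝ) < p := by linarith
  have hp₀0 : (0:ℝ) < p₀ := by linarith
  have hinvle : 1/p ≤ 1/p₀ := by
    apply one_div_le_one_div_of_le hp₀0 (by linarith)
  haveI : Nontrivial (Ev n) := by
    apply Module.nontrivial_of_finrank_pos (R := ℝ)
    rw [finrank_euclideanSpace_fin (𝕜 := ℝ) (n := n)]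
    omega
  set V1 := (volume (Metric.ball (0:Ev n) 1)).toReal with hV1def
  set V2 := (volume (Metric.ball (0:Ev n) 2)).toReal with hV2def
  set K2 := 16 * V2 / Real.log 2 with hK2def
  set KA := A * (16 * 4^n : ℝ) ^ (1/p₀) with hKAdef
  have hlog2 : (0:ℝ) < Real.log 2 := Real.log_pos (by norm_num)
  have hV1pos : 0 < V1 := by
    rw [hV1def]
    apply ENNReal.toReal_pos (Metric.measure_ball_pos volume (0:Ev n) one_pos).ne' measure_ball_lt_top.ne
  have hV2nn : 0 ≤ V2 := ENNReal.toReal_nonneg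
  have hK2nn : 0 ≤ K2 := by positivity
  have hKApos : 0 < KA := by positivity
  set C := 8*V1 + K2 + KA + 1 with hCdef
  have hC0 : 0 < C := by positivity
  refine ⟨C, hC0, ?_⟩
  intro v hv
  have hexp_neg : -(1:ℝ)/p < 0 := by
    rw [neg_div]
    simp only [neg_neg, Left.neg_neg_iff]
    positivity
  by_cases hc0 : fderiv ℝ γ v v - γ v = 0
  · -- degenerate case : RHS is ⊤
    obtain ⟨r, hr0, hrU⟩ := Metric.isOpen_iff.1 hUopen v hv
    refine ⟨Metric.ball v r, Metric.ball_mem_nhds v hr0, hrU, ?_⟩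
    intro lam hlam u β
    have hRHS : ENNReal.ofReal C * (ENNReal.ofReal |fderiv ℝ γ v v - γ v|) ^ (-(1 : ℝ) / p) *
        (ENNReal.ofReal lam) ^ (-(1 : ℝ) / p) = ⊤ := by
      rw [hc0]
      simp only [abs_zero, ENNReal.ofReal_zero]
      rw [ENNReal.zero_rpow_of_neg hexp_neg]
      rw [ENNReal.mul_top (by simp [ENNReal.ofReal_eq_zero]; linarith)]
      apply ENNReal.top_mul
      have h1 : (0:ℝ≥0∞) < ENNReal.ofReal lam := by
        rw [ENNReal.ofReal_pos]; linarith
      exact (ENNReal.rpow_pos h1 ENNReal.ofReal_ne_top).ne'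
    rw [hRHS]
    exact le_top
  · -- main case
    set c := fderiv ℝ γ v v - γ v with hcdef
    have hcpos : (0:ℝ) < |c| := abs_pos.2 hc0
    -- choose the ball
    have hψcont : ContinuousAt (fun y => fderiv ℝ γ y y - γ y) v := by
      have hfd : ContinuousOn (fderiv ℝ γ) U := (hγ.fderiv).continuousOn
      have h1 : ContinuousOn (fun y => fderiv ℝ γ y y - γ y) U :=
        (hfd.clm_apply continuousOn_id).sub hγ.continuousOn
      exact h1.continuousAt (hUopen.mem_nhds hv)
    have hnb : (fun y => fderiv ℝ γ y y - γ y) ⁻¹' Metric.closedBall c (|c|/8) ∈ 𝓝 v := by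
      apply hψcont.preimage_mem_nhds
      exact Metric.closedBall_mem_nhds c (by positivity)
    obtain ⟨r, hr0, hrsub⟩ := Metric.mem_nhds_iff.1 (Filter.inter_mem hnb (hUopen.mem_nhds hv))
    have hrU : Metric.ball v r ⊆ U := fun y hy => (hrsub hy).2
    have hψr : ∀ y ∈ Metric.ball v r, |fderiv ℝ γ y y - γ y - c| ≤ |c|/8 := by
      intro y hy
      have := (hrsub hy).1
      rwa [Set.mem_preimage, Metric.mem_closedBall, Real.dist_eq] at this
    refine ⟨Metric.ball v r, Metric.ball_mem_nhds v hr0, hrU, ?_⟩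
    intro lam hlam u β
    have hlam0 : (0:ℝ) < lam := by linarith
    have hD0 : (0:ℝ) < lam * |c| := by positivity
    set d := ENNReal.ofReal (lam * |c|) with hddef
    have hd0 : d ≠ 0 := by rw [hddef, ← ENNReal.ofReal_zero, Ne, ENNReal.ofReal_eq_ofReal_iff] <;> positivity
    have hdT : d ≠ ⊤ := ENNReal.ofReal_ne_top
    -- rewrite RHS
    have hRHSeq : ENNReal.ofReal C * (ENNReal.ofReal |c|) ^ (-(1 : ℝ) / p) *
        (ENNReal.ofReal lam) ^ (-(1 : ℝ) / p) = ENNReal.ofReal C * d ^ (-(1:ℝ)/p) := by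
      rw [mul_assoc]
      congr 1
      rw [← ENNReal.mul_rpow_of_ne_zero (by rw [Ne, ENNReal.ofReal_eq_zero]; push_neg; exact hcpos)
        (by rw [Ne, ENNReal.ofReal_eq_zero]; push_neg; linarith)]
      congr 1
      rw [← ENNReal.ofReal_mul (abs_nonneg c), mul_comm]
    rw [hRHSeq]
    set E := {y : Ev n | y ∈ Metric.ball v r ∧ |γ y + (inner ℝ u y : ℝ) - β| ≤ lam⁻¹} with hEdef
    have hd1 : ENNReal.ofReal (8:ℝ) ≤ d → (1:ℝ≥0∞) ≤ d := by
      intro h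
      refine le_trans ?_ h
      rw [← ENNReal.ofReal_one]
      exact ENNReal.ofReal_le_ofReal (by norm_num)
    rcases lt_or_ge (lam * |c|) 8 with hD8 | hD8
    · -- trivial case : lam * |c| < 8
      have h1 : volume E ≤ ENNReal.ofReal V1 := by
        have hsub : E ⊆ Metric.ball (0:Ev n) 1 := fun y hy => hUball (hrU hy.1)
        calc volume E ≤ volume (Metric.ball (0:Ev n) 1) := measure_mono hsub
          _ = ENNReal.ofReal V1 := (ENNReal.ofReal_toReal measure_ball_lt_top.ne).symm
      refine h1.trans ?_
      have h2 : ENNReal.ofReal ((8:ℝ)) ^ (-(1:ℝ)/p) ≤ d ^ (-(1:ℝ)/p) := by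
        rw [show (-(1:ℝ)/p) = -(1/p) by rw [neg_div], ENNReal.rpow_neg, ENNReal.rpow_neg]
        apply ENNReal.inv_le_inv.2
        apply ENNReal.rpow_le_rpow (ENNReal.ofReal_le_ofReal hD8.le) (by positivity)
      have h3 : ENNReal.ofReal (8:ℝ) ^ (-(1:ℝ)/p) = ENNReal.ofReal ((8:ℝ) ^ (-(1:ℝ)/p)) :=
        ENNReal.ofReal_rpow_of_pos (by norm_num)
      have h4 : (1:ℝ)/8 ≤ (8:ℝ) ^ (-(1:ℝ)/p) := by
        have h5 : (8:ℝ) ^ (-1:ℝ) ≤ (8:ℝ) ^ (-(1:ℝ)/p) := by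
          apply Real.rpow_le_rpow_of_exponent_le (by norm_num)
          rw [neg_div]
          simp only [neg_le_neg_iff]
          calc (1:ℝ)/p ≤ 1/p₀ := hinvle
            _ ≤ 1 := by rw [div_le_one hp₀0]; linarith
        rw [Real.rpow_neg_one] at h5
        linarith [h5]
      calc ENNReal.ofReal V1 ≤ ENNReal.ofReal (C * ((8:ℝ) ^ (-(1:ℝ)/p))) := by
            apply ENNReal.ofReal_le_ofReal
            calc V1 = 8 * V1 * (1/8) := by ring
              _ ≤ C * ((8:ℝ) ^ (-(1:ℝ)/p)) := by
                  apply mul_le_mul (by rw [hCdef]; linarith) h4 (by norm_num)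
                  linarith
        _ = ENNReal.ofReal C * ENNReal.ofReal ((8:ℝ) ^ (-(1:ℝ)/p)) := by
            rw [ENNReal.ofReal_mul hC0.le]
        _ = ENNReal.ofReal C * ENNReal.ofReal (8:ℝ) ^ (-(1:ℝ)/p) := by rw [h3]
        _ ≤ ENNReal.ofReal C * d ^ (-(1:ℝ)/p) := mul_le_mul_right h2 _
    · rcases le_or_gt (|c|/2) (|c + β|) with hsgn | hsgn
      · -- case B
        have hB := caseB n U hUball γ hγ v r hrU c hc0 hψr lam hlam u β hD8 hsgn
        refine hB.trans ?_
        have hd1' : (1:ℝ≥0∞) ≤ d := hd1 (ENNReal.ofReal_le_ofReal hD8)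
        have h1 : ENNReal.ofReal (K2 / (lam * |c|)) = ENNReal.ofReal K2 * d⁻¹ := by
          rw [ENNReal.ofReal_div_of_pos hD0, div_eq_mul_inv]
        rw [show (16 * (volume (Metric.ball (0:Ev n) 2)).toReal / Real.log 2) = K2 from rfl, h1]
        have h2 : d⁻¹ ≤ d ^ (-(1:ℝ)/p) := by
          rw [← ENNReal.rpow_neg_one]
          apply ENNReal.rpow_le_rpow_of_exponent_le hd1'
          rw [neg_div]
          simp only [neg_le_neg_iff]
          calc (1:ℝ)/p ≤ 1/p₀ := hinvle
            _ ≤ 1 := by rw [div_le_one hp₀0]; linarith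
        have h3 : ENNReal.ofReal K2 ≤ ENNReal.ofReal C := by
          apply ENNReal.ofReal_le_ofReal
          rw [hCdef]
          linarith
        exact mul_le_mul' h3 h2
      · -- case A
        have hββ : |c|/2 ≤ |β| := by
          have h1 := abs_add_le (c + β) (-β)
          rw [show (c + β) + (-β) = c by ring, abs_neg] at h1
          linarith
        have hA' := caseA n p₀ hp₀ U hUopen hUball γ hγ.continuousOn A hmaxA lam hlam u β
          (E := E) (fun y hy => hrU hy.1) (fun y hy => hy.2)
        -- transform
        have hd1' : (1:ℝ≥0∞) ≤ d := hd1 (ENNReal.ofReal_le_ofReal hD8)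
        have hB1pos : volume (Metric.ball (0:Ev n) 1) ≠ 0 :=
          (Metric.measure_ball_pos volume (0:Ev n) one_pos).ne'
        have hB1T : volume (Metric.ball (0:Ev n) 1) ≠ ⊤ := measure_ball_lt_top.ne
        have hvolB4 : volume (Metric.ball (0:Ev n) 4)
            = ENNReal.ofReal ((4:ℝ)^n) * volume (Metric.ball (0:Ev n) 1) := by
          rw [Measure.addHaar_ball volume (0:Ev n) (by norm_num : (0:ℝ) ≤ 4)]
          rw [finrank_euclideanSpace_fin]
        -- key real inequality
        have hkey : (4:ℝ)^n * (8/lam) ≤ (16 * 4^n / (lam * |c|)) * (|β| + 2/lam) := by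
          have h4n : (0:ℝ) < 4^n := by positivity
          have h1 : (16 * 4^n / (lam * |c|)) * (|β| + 2/lam) ≥
              (16 * 4^n / (lam * |c|)) * (|c|/2) := by
            apply mul_le_mul_of_nonneg_left _ (by positivity)
            have : (0:ℝ) < 2/lam := by positivity
            linarith
          have h2 : (16 * 4^n / (lam * |c|)) * (|c|/2) = 4^n * (8/lam) := by
            field_simp
            ring
          linarith
        have hineq1 : volume (Metric.ball (0:Ev n) 4) * ENNReal.ofReal (8/lam)
            ≤ ENNReal.ofReal (16 * 4^n / (lam * |c|)) *
              (volume (Metric.ball (0:Ev n) 1) * ENNReal.ofReal (|β| + 2/lam)) := by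
          rw [hvolB4]
          calc ENNReal.ofReal ((4:ℝ)^n) * volume (Metric.ball (0:Ev n) 1) * ENNReal.ofReal (8/lam)
              = volume (Metric.ball (0:Ev n) 1) * ENNReal.ofReal ((4:ℝ)^n * (8/lam)) := by
                rw [ENNReal.ofReal_mul (by positivity)]
                ring
            _ ≤ volume (Metric.ball (0:Ev n) 1) *
                ENNReal.ofReal ((16 * 4^n / (lam * |c|)) * (|β| + 2/lam)) := by
                exact mul_le_mul_right (ENNReal.ofReal_le_ofReal hkey) _
            _ = ENNReal.ofReal (16 * 4^n / (lam * |c|)) *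
                (volume (Metric.ball (0:Ev n) 1) * ENNReal.ofReal (|β| + 2/lam)) := by
                rw [ENNReal.ofReal_mul (by positivity)]
                ring
        -- raise to power 1/p₀ and combine
        set m := (volume (Metric.ball (0:Ev n) 1) * ENNReal.ofReal (|β| + 2/lam)) ^ (1/p₀)
          with hmdef
        have hm0 : m ≠ 0 := by
          rw [hmdef]
          apply (ENNReal.rpow_pos _ _).ne'
          · exact ENNReal.mul_pos hB1pos (by rw [Ne, ENNReal.ofReal_eq_zero]; push_neg; positivity)
          · exact ENNReal.mul_ne_top hB1T ENNReal.ofReal_ne_top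
        have hmT : m ≠ ⊤ := by
          rw [hmdef]
          exact ENNReal.rpow_ne_top_of_nonneg (by positivity)
            (ENNReal.mul_ne_top hB1T ENNReal.ofReal_ne_top)
        have hstep : volume E * m ≤
            (ENNReal.ofReal A * ENNReal.ofReal (16 * 4^n / (lam * |c|)) ^ (1/p₀)) * m := by
          calc volume E * m ≤ ENNReal.ofReal A *
              (volume (Metric.ball (0:Ev n) 4) * ENNReal.ofReal (8/lam)) ^ (1/p₀) := hA'
            _ ≤ ENNReal.ofReal A * (ENNReal.ofReal (16 * 4^n / (lam * |c|)) *
                (volume (Metric.ball (0:Ev n) 1) * ENNReal.ofReal (|β| + 2/lam))) ^ (1/p₀) := by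
                apply mul_le_mul_right
                exact ENNReal.rpow_le_rpow hineq1 (by positivity)
            _ = (ENNReal.ofReal A * ENNReal.ofReal (16 * 4^n / (lam * |c|)) ^ (1/p₀)) * m := by
                rw [ENNReal.mul_rpow_of_nonneg _ _ (by positivity : (0:ℝ) ≤ 1/p₀), hmdef]
                ring
        have hcancel : volume E ≤
            ENNReal.ofReal A * ENNReal.ofReal (16 * 4^n / (lam * |c|)) ^ (1/p₀) :=
          (ENNReal.mul_le_mul_iff_left hm0 hmT).1 hstep
        refine hcancel.trans ?_
        -- ofReal (16*4^n / D) ^ (1/p₀) = ofReal(16*4^n)^(1/p₀) * d^(-(1/p₀))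
        have hsplit : ENNReal.ofReal (16 * 4^n / (lam * |c|)) ^ (1/p₀)
            = ENNReal.ofReal ((16:ℝ) * 4^n) ^ (1/p₀) * d ^ (-(1/p₀) : ℝ) := by
          rw [ENNReal.ofReal_div_of_pos hD0, ENNReal.div_rpow_of_nonneg _ _ (by positivity),
            div_eq_mul_inv, ENNReal.rpow_neg]
        rw [hsplit, ← mul_assoc]
        have hstep2 : d ^ (-(1/p₀):ℝ) ≤ d ^ (-(1:ℝ)/p) := by
          apply ENNReal.rpow_le_rpow_of_exponent_le hd1'
          rw [neg_div]
          simp only [neg_le_neg_iff]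
          exact hinvle
        refine le_trans (mul_le_mul_right hstep2 _) ?_
        apply mul_le_mul_left
        have h6 : ENNReal.ofReal A * ENNReal.ofReal ((16:ℝ) * 4^n) ^ (1/p₀)
            = ENNReal.ofReal (A * ((16:ℝ) * 4^n) ^ (1/p₀)) := by
          rw [ENNReal.ofReal_rpow_of_pos (by positivity), ← ENNReal.ofReal_mul hA0.le]
        rw [h6]
        apply ENNReal.ofReal_le_ofReal
        rw [hCdef, hKAdef]
        linarith
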